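/- Let α and β be partitions. The lexicographically largest principal hook length partition among all ν with nonzero Littlewood–Richardson coefficient c(ν; α, β) equals hl(α) + hl(β) (componentwise sum). -/

import Mathlib

open Finset

namespace SkewHooks

/-- The `i`-th principal hook length of a partition (0-indexed):
the hook length of the box `(i, i)`, or `0` if `(i,i)` is not in the diagram. -/
def hl (l : YoungDiagram) (i : ℕ) : ℕ := l.rowLen i + l.colLen i - (2 * i + 1)

/-- The Durfee size of a partition: the side of the largest square contained in it. -/
def durfee (l : YoungDiagram) : ℕ :=
  ((Finset.range (l.card + 1)).filter (fun i => (i, i) ∈ l)).card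

/-- The set of boxes of the skew diagram `l / m`. -/
def skewCells (l m : YoungDiagram) : Finset (ℕ × ℕ) := l.cells \ m.cells

/-- The first northwest ribbon of a set of boxes: all boxes `(i,j)` such that
`(i-1, j-1)` is not a box of the set. -/
def nw1 (A : Finset (ℕ × ℕ)) : Finset (ℕ × ℕ) :=
  A.filter (fun c => c.1 = 0 ∨ c.2 = 0 ∨ (c.1 - 1, c.2 - 1) ∉ A)

/-- The set of boxes remaining after removing the first `k` northwest ribbons. -/
def nwRest (A : Finset (ℕ × ℕ)) : ℕ → Finset (ℕ × ℕ)
  | 0 => A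
  | k + 1 => nwRest A k \ nw1 (nwRest A k)

/-- The `(k+1)`-st northwest ribbon (0-indexed `k`). -/
def nw (A : Finset (ℕ × ℕ)) (k : ℕ) : Finset (ℕ × ℕ) := nw1 (nwRest A k)

/-- The northwest ribbon length partition: `pinw A k = |nw_{k+1}(A)|` (0-indexed). -/
def pinw (A : Finset (ℕ × ℕ)) (k : ℕ) : ℕ := (nw A k).card

/-- `T` is a Littlewood-Richardson filling of the set of boxes `D` with content `ν`:
a semistandard filling (weakly increasing rows, strictly increasing columns) with
positive entries, `ν k` entries equal to `k+1`, whose reverse reading word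
(right to left, top to bottom) is a lattice word, and which is `0` outside `D`. -/
def IsLRFilling (D : Finset (ℕ × ℕ)) (ν : YoungDiagram) (T : ℕ × ℕ → ℕ) : Prop :=
  (∀ c, c ∉ D → T c = 0) ∧
  (∀ c ∈ D, 1 ≤ T c) ∧
  (∀ i j, (i, j) ∈ D → (i, j + 1) ∈ D → T (i, j) ≤ T (i, j + 1)) ∧
  (∀ i j, (i, j) ∈ D → (i + 1, j) ∈ D → T (i, j) < T (i + 1, j)) ∧
  (∀ k, (D.filter (fun c => T c = k + 1)).card = ν.rowLen k) ∧
  (∀ i j k, (D.filter (fun c => (c.1 < i ∨ (c.1 = i ∧ j ≤ c.2)) ∧ T c = k + 2)).card ≤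
    (D.filter (fun c => (c.1 < i ∨ (c.1 = i ∧ j ≤ c.2)) ∧ T c = k + 1)).card)

/-- The coefficient of `[ν]` in the skew character of the set of boxes `D`:
the number of LR fillings of `D` with content `ν`. -/
noncomputable def skewCoeff (D : Finset (ℕ × ℕ)) (ν : YoungDiagram) : ℕ :=
  Set.ncard {T : ℕ × ℕ → ℕ | IsLRFilling D ν T}

/-- The Littlewood-Richardson coefficient `c(l; m, ν)`:
the number of LR tableaux of shape `l / m` and content `ν`. -/
noncomputable def lr (l m ν : YoungDiagram) : ℕ := skewCoeff (skewCells l m) ν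

/-- Lexicographic order on sequences: `f ≤lex g`. -/
def lexLE (f g : ℕ → ℕ) : Prop :=
  f = g ∨ ∃ i, f i < g i ∧ ∀ j < i, f j = g j

/-- A set of boxes decomposes if it splits into two nonempty pieces sharing
no row and no column. -/
def Decomposes (A : Finset (ℕ × ℕ)) : Prop :=
  ∃ B C : Finset (ℕ × ℕ), B ∪ C = A ∧ B.Nonempty ∧ C.Nonempty ∧
    ∀ b ∈ B, ∀ c ∈ C, b.1 ≠ c.1 ∧ b.2 ≠ c.2

/-- A set of boxes is connected if it is nonempty and does not decompose. -/
def Connected (A : Finset (ℕ × ℕ)) : Prop := A.Nonempty ∧ ¬ Decomposes A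


open YoungDiagram

lemma diag_mem_iff {l : YoungDiagram} {i : ℕ} :
    (i, i) ∈ l ↔ i < l.rowLen i := mem_iff_lt_rowLen

lemma hl_eq_zero {l : YoungDiagram} {i : ℕ} (h : (i,i) ∉ l) : hl l i = 0 := by
  have h1 : l.rowLen i ≤ i := by
    by_contra hc
    exact h (mem_iff_lt_rowLen.2 (by omega))
  have h2 : l.colLen i ≤ i := by
    by_contra hc
    exact h (mem_iff_lt_colLen.2 (by omega))
  unfold hl; omega

lemma rowLen_eq_of {l : YoungDiagram} {r X : ℕ} (h : ∀ j, (r,j) ∈ l ↔ j < X) :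
    l.rowLen r = X := by
  rcases X with _ | X
  · by_contra hc
    have : (r, 0) ∈ l := mem_iff_lt_rowLen.2 (by omega)
    exact absurd ((h 0).1 this) (by omega)
  · have h1 : (r, X) ∈ l := (h X).2 (by omega)
    have h2 : (r, X+1) ∉ l := fun hc => by have := (h _).1 hc; omega
    rw [mem_iff_lt_rowLen] at h1
    have h2' : ¬ (X + 1 < l.rowLen r) := fun hc => h2 (mem_iff_lt_rowLen.2 hc)
    omega

lemma colLen_eq_of {l : YoungDiagram} {c X : ℕ} (h : ∀ i, (i,c) ∈ l ↔ i < X) :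
    l.colLen c = X := by
  rcases X with _ | X
  · by_contra hc
    have : (0, c) ∈ l := mem_iff_lt_colLen.2 (by omega)
    exact absurd ((h 0).1 this) (by omega)
  · have h1 : (X, c) ∈ l := (h X).2 (by omega)
    have h2 : (X+1, c) ∉ l := fun hc => by have := (h _).1 hc; omega
    rw [mem_iff_lt_colLen] at h1
    have h2' : ¬ (X + 1 < l.colLen c) := fun hc => h2 (mem_iff_lt_colLen.2 hc)
    omega

/-- region of cells with min coordinate < d -/
def reg (l : YoungDiagram) (d : ℕ) : Finset (ℕ×ℕ) :=
  l.cells.filter (fun c => min c.1 c.2 < d)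

lemma card_reg (l : YoungDiagram) (d : ℕ) :
    (reg l d).card = ∑ i ∈ range d, hl l i := by
  induction d with
  | zero => simp [reg]
  | succ d ih =>
    have hsplit : reg l (d+1) = reg l d ∪ (l.cells.filter (fun c => min c.1 c.2 = d)) := by
      ext c
      simp only [reg, mem_union, mem_filter, ← and_or_left]
      exact and_congr_right fun _ => by omega
    have hdisj : Disjoint (reg l d) (l.cells.filter (fun c => min c.1 c.2 = d)) := by
      rw [Finset.disjoint_left]
      intro c hc hc'
      simp only [reg, mem_filter] at hc hc'
      omega
    have hhook : (l.cells.filter (fun c => min c.1 c.2 = d)).card = hl l d := by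
      have heq : l.cells.filter (fun c => min c.1 c.2 = d) =
          (Ico d (l.rowLen d)).image (fun j => (d, j)) ∪
          (Ico (d+1) (l.colLen d)).image (fun i => (i, d)) := by
        ext ⟨r, c⟩
        simp only [mem_filter, mem_union, mem_image, mem_Ico, mem_cells]
        constructor
        · rintro ⟨hmem, hmin⟩
          rcases le_or_gt r c with hle | hlt
          · left
            refine ⟨c, ⟨?_, mem_iff_lt_rowLen.1 (by
                have : (d, c) ∈ l := l.up_left_mem (by omega) le_rfl hmem
                exact this)⟩, ?_⟩
            · omega
            · simp; omega
          · right
            refine ⟨r, ⟨?_, mem_iff_lt_colLen.1 (by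
                have : (r, d) ∈ l := l.up_left_mem le_rfl (by omega) hmem
                exact this)⟩, ?_⟩
            · omega
            · simp; omega
        · rintro (⟨j, ⟨hj1, hj2⟩, hje⟩ | ⟨i, ⟨hi1, hi2⟩, hie⟩)
          · obtain ⟨rfl, rfl⟩ := Prod.mk.inj hje.symm
            exact ⟨mem_iff_lt_rowLen.2 hj2, by omega⟩
          · obtain ⟨rfl, rfl⟩ := Prod.mk.inj hie.symm
            exact ⟨mem_iff_lt_colLen.2 hi2, by omega⟩
      rw [heq, card_union_of_disjoint, card_image_of_injective _ (by intro x y h; simpa using h),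
        card_image_of_injective _ (by intro x y h; simpa using h), Nat.card_Ico, Nat.card_Ico]
      · unfold hl
        by_cases hd : (d, d) ∈ l
        · have h1 : d < l.rowLen d := mem_iff_lt_rowLen.1 hd
          have h2 : d < l.colLen d := mem_iff_lt_colLen.1 hd
          omega
        · have h1 : l.rowLen d ≤ d := by
            by_contra hc; exact hd (mem_iff_lt_rowLen.2 (by omega))
          have h2 : l.colLen d ≤ d := by
            by_contra hc; exact hd (mem_iff_lt_colLen.2 (by omega))
          omega
      · rw [Finset.disjoint_left]
        rintro ⟨r, c⟩ h1 h2
        simp only [mem_image, mem_Ico] at h1 h2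
        obtain ⟨j, hj, hje⟩ := h1
        obtain ⟨i, hi, hie⟩ := h2
        obtain ⟨rfl, rfl⟩ := Prod.mk.inj hje.symm
        obtain ⟨h1, h2⟩ := Prod.mk.inj hie
        omega
    rw [hsplit, card_union_of_disjoint hdisj, ih, hhook, Finset.sum_range_succ]


lemma mem_skew {l a : YoungDiagram} {c : ℕ × ℕ} :
    c ∈ skewCells l a ↔ c ∈ l ∧ c ∉ a := by
  simp [skewCells, mem_sdiff, mem_cells]

section upper
variable {ν a b : YoungDiagram} {T : ℕ × ℕ → ℕ}

/-- weakly increasing along a row of the skew shape -/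
lemma row_chain (hT : IsLRFilling (skewCells ν a) b T) {r c1 c2 : ℕ}
    (h1 : (r, c1) ∈ skewCells ν a) (h2 : (r, c2) ∈ skewCells ν a) (hc : c1 ≤ c2) :
    T (r, c1) ≤ T (r, c2) := by
  obtain ⟨k, rfl⟩ := Nat.exists_eq_add_of_le hc
  clear hc
  induction k with
  | zero => simp
  | succ k ih =>
    have hmid : (r, c1 + k) ∈ skewCells ν a := by
      rw [mem_skew] at h1 h2 ⊢
      refine ⟨ν.up_left_mem le_rfl (by omega) h2.1, fun hmem => h1.2 ?_⟩
      exact a.up_left_mem le_rfl (by omega) hmem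
    calc T (r, c1) ≤ T (r, c1 + k) := ih hmid
    _ ≤ T (r, c1 + k + 1) := hT.2.2.1 r (c1 + k) hmid (by rw [← Nat.add_assoc] at h2; exact h2)

/-- strictly increasing along a column of the skew shape -/
lemma col_chain (hT : IsLRFilling (skewCells ν a) b T) {r1 r2 c : ℕ}
    (h1 : (r1, c) ∈ skewCells ν a) (h2 : (r2, c) ∈ skewCells ν a) (hc : r1 < r2) :
    T (r1, c) < T (r2, c) := by
  obtain ⟨k, rfl⟩ : ∃ k, r2 = r1 + 1 + k := ⟨r2 - r1 - 1, by omega⟩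
  clear hc
  induction k with
  | zero =>
    simpa using hT.2.2.2.1 r1 c h1 (by simpa using h2)
  | succ k ih =>
    have hmid : (r1 + 1 + k, c) ∈ skewCells ν a := by
      rw [mem_skew] at h1 h2 ⊢
      refine ⟨ν.up_left_mem (by omega) le_rfl h2.1, fun hmem => h1.2 ?_⟩
      exact a.up_left_mem (by omega) le_rfl hmem
    calc T (r1, c) < T (r1 + 1 + k, c) := ih hmid
    _ < T (r1 + 1 + k + 1, c) := hT.2.2.2.1 _ c hmid (by rw [← Nat.add_assoc] at h2; exact h2)

/-- entries of value `v+2` occur in rows `> v` -/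
lemma value_row (hT : IsLRFilling (skewCells ν a) b T) :
    ∀ v r c, (r, c) ∈ skewCells ν a → T (r, c) = v + 2 → v < r := by
  intro v
  induction v with
  | zero =>
    intro r c hmem hval
    by_contra hr
    have hr0 : r = 0 := by omega
    subst hr0
    have hlat := hT.2.2.2.2.2 0 c 0
    have hone : 1 ≤ (Finset.filter (fun x => (x.1 < 0 ∨ (x.1 = 0 ∧ c ≤ x.2)) ∧ T x = 0 + 2)
        (skewCells ν a)).card := by
      rw [Nat.one_le_iff_ne_zero, ← Nat.pos_iff_ne_zero, Finset.card_pos]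
      exact ⟨(0, c), mem_filter.2 ⟨hmem, Or.inr ⟨rfl, le_rfl⟩, hval⟩⟩
    have hzero : (Finset.filter (fun x => (x.1 < 0 ∨ (x.1 = 0 ∧ c ≤ x.2)) ∧ T x = 0 + 1)
        (skewCells ν a)).card = 0 := by
      rw [Finset.card_eq_zero, Finset.filter_eq_empty_iff]
      rintro ⟨r', c'⟩ hmem' ⟨hpre, hval'⟩
      obtain ⟨rfl, hcc⟩ : r' = 0 ∧ c ≤ c' := by omega
      have := row_chain hT hmem hmem' hcc
      omega
    omega
  | succ v ih =>
    intro r c hmem hval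
    by_contra hr
    push_neg at hr
    have hlat := hT.2.2.2.2.2 r c (v + 1)
    have hone : 1 ≤ (Finset.filter (fun x => (x.1 < r ∨ (x.1 = r ∧ c ≤ x.2)) ∧ T x = v + 1 + 2)
        (skewCells ν a)).card := by
      rw [Nat.one_le_iff_ne_zero, ← Nat.pos_iff_ne_zero, Finset.card_pos]
      exact ⟨(r, c), mem_filter.2 ⟨hmem, Or.inr ⟨rfl, le_rfl⟩, hval⟩⟩
    have hzero : (Finset.filter (fun x => (x.1 < r ∨ (x.1 = r ∧ c ≤ x.2)) ∧ T x = v + 1 + 1)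
        (skewCells ν a)).card = 0 := by
      rw [Finset.card_eq_zero, Finset.filter_eq_empty_iff]
      rintro ⟨r', c'⟩ hmem' ⟨hpre, hval'⟩
      have hrow : v < r' := ih r' c' hmem' (by omega)
      obtain ⟨rfl, hcc⟩ : r' = r ∧ c ≤ c' := by omega
      have := row_chain hT hmem hmem' hcc
      omega
    omega

/-- at most `d` cells of any given value in columns `< d` -/
lemma col_value_bound (hT : IsLRFilling (skewCells ν a) b T) (d k : ℕ) :
    ((skewCells ν a).filter (fun c => c.2 < d ∧ T c = k + 1)).card ≤ d := by
  have : ((skewCells ν a).filter (fun c => c.2 < d ∧ T c = k + 1)).card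
      ≤ (Finset.range d).card := by
    apply Finset.card_le_card_of_injOn (fun c => c.2)
    · intro c hc
      simp only [mem_coe, mem_filter] at hc
      simp [hc.2.1]
    · rintro ⟨r1, c1⟩ h1 ⟨r2, c2⟩ h2 he
      simp only [Finset.coe_filter, Set.mem_setOf_eq] at h1 h2
      have he' : c1 = c2 := he
      subst he'
      rcases Nat.lt_trichotomy r1 r2 with h | h | h
      · have := col_chain hT h1.1 h2.1 h
        omega
      · rw [h]
      · have := col_chain hT h2.1 h1.1 h
        omega
  simpa using this

end upper

section upper2
variable {ν a b : YoungDiagram} {T : ℕ × ℕ → ℕ}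

lemma value_lt (hT : IsLRFilling (skewCells ν a) b T) {c : ℕ × ℕ}
    (hc : c ∈ skewCells ν a) : 1 ≤ T c ∧ T c - 1 < b.colLen 0 := by
  have h1 : 1 ≤ T c := hT.2.1 c hc
  refine ⟨h1, ?_⟩
  set k := T c - 1 with hk
  have hcontent := hT.2.2.2.2.1 k
  have hmem : c ∈ (skewCells ν a).filter (fun x => T x = k + 1) :=
    mem_filter.2 ⟨hc, by omega⟩
  have hpos : 1 ≤ b.rowLen k := by
    have := Finset.card_pos.2 ⟨c, hmem⟩
    omega
  have : (k, 0) ∈ b := YoungDiagram.mem_iff_lt_rowLen.2 (by omega)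
  exact YoungDiagram.mem_iff_lt_colLen.1 this

lemma main_bound (hT : IsLRFilling (skewCells ν a) b T) (d : ℕ) :
    (reg ν d).card ≤ ∑ i ∈ range d, (hl a i + hl b i) := by
  classical
  set K := b.colLen 0 with hK
  -- split into a-part and skew part
  have hsub : reg ν d ⊆ reg a d ∪ ((skewCells ν a).filter (fun c => min c.1 c.2 < d)) := by
    intro c hc
    simp only [reg, mem_filter, mem_union] at hc ⊢
    by_cases hca : c ∈ a.cells
    · left
      exact ⟨hca, hc.2⟩
    · right
      refine ⟨?_, hc.2⟩
      simp only [skewCells]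
      exact mem_sdiff.2 ⟨hc.1, hca⟩
  have h2 : (reg ν d).card ≤ (reg a d).card +
      ((skewCells ν a).filter (fun c => min c.1 c.2 < d)).card :=
    le_trans (card_le_card hsub) (card_union_le _ _)
  -- fiberwise decomposition of the skew part by values
  have h3 : ((skewCells ν a).filter (fun c => min c.1 c.2 < d)).card
      = ∑ k ∈ range K, ((skewCells ν a).filter
          (fun c => min c.1 c.2 < d ∧ T c = k + 1)).card := by
    rw [Finset.card_eq_sum_card_fiberwise
      (f := fun c => T c - 1) (t := range K) (fun c hc => by
        simp only [mem_coe, mem_filter] at hc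
        have := value_lt hT hc.1
        simp only [mem_coe, mem_range]; omega)]
    apply Finset.sum_congr rfl
    intro k hk
    congr 1
    ext c
    simp only [mem_filter]
    constructor
    · rintro ⟨⟨hc1, hc2⟩, hc3⟩
      have := value_lt hT hc1
      exact ⟨hc1, hc2, by omega⟩
    · rintro ⟨hc1, hc2, hc3⟩
      exact ⟨⟨hc1, hc2⟩, by omega⟩
  -- per-value bound
  have h4 : ∀ k ∈ range K, ((skewCells ν a).filter
      (fun c => min c.1 c.2 < d ∧ T c = k + 1)).card
      ≤ (b.cells.filter (fun c => min c.1 c.2 < d ∧ c.1 = k)).card := by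
    intro k _
    have hrhs : (b.cells.filter (fun c => min c.1 c.2 < d ∧ c.1 = k)) =
        (range (if k < d then b.rowLen k else min (b.rowLen k) d)).image (fun j => (k, j)) := by
      ext ⟨r, j⟩
      simp only [mem_filter, mem_image, mem_range, mem_cells]
      constructor
      · rintro ⟨hmem, hmin, rfl⟩
        have hj : j < b.rowLen r := YoungDiagram.mem_iff_lt_rowLen.1 hmem
        exact ⟨j, by split <;> omega, rfl⟩
      · rintro ⟨j', hj', hje⟩
        obtain ⟨rfl, rfl⟩ := Prod.mk.inj hje.symm
        have hjlt : j < b.rowLen r := by revert hj'; split <;> omega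
        refine ⟨YoungDiagram.mem_iff_lt_rowLen.2 hjlt, by revert hj'; split <;> omega, rfl⟩
    rw [hrhs, card_image_of_injective _ (fun x y h => by simpa using h), card_range]
    by_cases hkd : k < d
    · simp only [if_pos hkd]
      calc ((skewCells ν a).filter (fun c => min c.1 c.2 < d ∧ T c = k + 1)).card
          ≤ ((skewCells ν a).filter (fun c => T c = k + 1)).card :=
            card_le_card (fun c hc => by
              simp only [mem_filter] at hc ⊢; exact ⟨hc.1, hc.2.2⟩)
        _ = b.rowLen k := hT.2.2.2.2.1 k
    · simp only [if_neg hkd]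
      have hd : d ≤ k := by omega
      refine Nat.le_min.2 ⟨?_, ?_⟩
      · calc ((skewCells ν a).filter (fun c => min c.1 c.2 < d ∧ T c = k + 1)).card
            ≤ ((skewCells ν a).filter (fun c => T c = k + 1)).card :=
              card_le_card (fun c hc => by
                simp only [mem_filter] at hc ⊢; exact ⟨hc.1, hc.2.2⟩)
          _ = b.rowLen k := hT.2.2.2.2.1 k
      · calc ((skewCells ν a).filter (fun c => min c.1 c.2 < d ∧ T c = k + 1)).card
            ≤ ((skewCells ν a).filter (fun c => c.2 < d ∧ T c = k + 1)).card := by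
              apply card_le_card
              intro c hc
              simp only [mem_filter] at hc ⊢
              refine ⟨hc.1, ?_, hc.2.2⟩
              rcases Nat.eq_zero_or_pos k with rfl | hkpos
              · omega
              · have : k - 1 < c.1 := value_row hT (k-1) c.1 c.2 (by
                  obtain ⟨c1, c2⟩ := c; exact hc.1) (by
                  obtain ⟨c1, c2⟩ := c
                  have := hc.2.2; simp only at this ⊢; omega)
                omega
          _ ≤ d := col_value_bound hT d k
  -- reassemble the b-side
  have h5 : ∑ k ∈ range K, (b.cells.filter (fun c => min c.1 c.2 < d ∧ c.1 = k)).card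
      = (reg b d).card := by
    rw [Finset.card_eq_sum_card_fiberwise
      (f := fun c => c.1) (t := range K) ?_]
    rotate_left
    · rintro ⟨c1, c2⟩ hc
      simp only [reg, mem_coe, mem_filter, mem_cells] at hc
      have : (c1, 0) ∈ b := b.up_left_mem le_rfl (Nat.zero_le _) hc.1
      simp only [mem_coe, mem_range]
      exact YoungDiagram.mem_iff_lt_colLen.1 this
    apply Finset.sum_congr rfl
    intro k hk
    congr 1
    ext c
    simp only [reg, mem_filter]
    tauto
  calc (reg ν d).card
      ≤ (reg a d).card + ((skewCells ν a).filter (fun c => min c.1 c.2 < d)).card := h2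
    _ ≤ (reg a d).card + (reg b d).card := by
        rw [h3, ← h5]
        exact Nat.add_le_add_left (Finset.sum_le_sum h4) _
    _ = ∑ i ∈ range d, (hl a i + hl b i) := by
        rw [card_reg, card_reg, ← Finset.sum_add_distrib]

end upper2

lemma upper_dir (a b ν : YoungDiagram) (h : lr ν a b ≠ 0) :
    lexLE (fun i => hl ν i) (fun i => hl a i + hl b i) := by
  classical
  unfold lr skewCoeff at h
  obtain ⟨T, hT⟩ := Set.nonempty_of_ncard_ne_zero h
  have hT' : IsLRFilling (skewCells ν a) b T := hT
  have hsum : ∀ d, ∑ i ∈ range d, hl ν i ≤ ∑ i ∈ range d, (hl a i + hl b i) := fun d => by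
    rw [← card_reg]
    exact main_bound hT' d
  by_cases heq : (fun i => hl ν i) = (fun i => hl a i + hl b i)
  · exact Or.inl heq
  · right
    have hne : ∃ i, hl ν i ≠ hl a i + hl b i := by
      by_contra hc
      push_neg at hc
      exact heq (funext hc)
    let i0 := Nat.find hne
    have hmin : ∀ j < i0, hl ν j = hl a j + hl b j := fun j hj => by
      have := Nat.find_min hne hj
      simpa using this
    have hspec : hl ν i0 ≠ hl a i0 + hl b i0 := Nat.find_spec hne
    refine ⟨i0, ?_, hmin⟩
    have h1 := hsum (i0 + 1)
    rw [Finset.sum_range_succ, Finset.sum_range_succ] at h1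
    have h2 : ∑ j ∈ range i0, hl ν j = ∑ j ∈ range i0, (hl a j + hl b j) :=
      Finset.sum_congr rfl (fun j hj => hmin j (mem_range.1 hj))
    show hl ν i0 < hl a i0 + hl b i0
    omega


section construct
variable (a b : YoungDiagram)

lemma exists_nondiag : ∃ i, ¬((i, i) ∈ a ∧ (i, i) ∈ b) := by
  refine ⟨a.colLen 0, fun h => ?_⟩
  have h1 := mem_iff_lt_colLen.1 h.1
  have h2 := a.colLen_anti 0 (a.colLen 0) (Nat.zero_le _)
  omega

/-- the minimum of the Durfee sizes of `a` and `b` -/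
noncomputable def mm : ℕ := Nat.find (exists_nondiag a b)

variable {a b}

lemma lt_mm_iff {i : ℕ} : i < mm a b ↔ ((i, i) ∈ a ∧ (i, i) ∈ b) := by
  constructor
  · intro h
    have := Nat.find_min (exists_nondiag a b) h
    tauto
  · intro h
    by_contra hc
    push_neg at hc
    have hspec := Nat.find_spec (exists_nondiag a b)
    have : (mm a b, mm a b) ∈ a ∧ (mm a b, mm a b) ∈ b :=
      ⟨a.up_left_mem (by omega) (by omega) h.1, b.up_left_mem (by omega) (by omega) h.2⟩
    exact hspec this

-- dictionary
lemma mm_le_rowLen_a {j : ℕ} (h : j < mm a b) : mm a b ≤ a.rowLen j := by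
  have hd : (mm a b - 1, mm a b - 1) ∈ a := ((lt_mm_iff (a := a) (b := b)).1 (by omega)).1
  have : (j, mm a b - 1) ∈ a := a.up_left_mem (by omega) le_rfl hd
  have := mem_iff_lt_rowLen.1 this
  omega

lemma mm_le_colLen_a {j : ℕ} (h : j < mm a b) : mm a b ≤ a.colLen j := by
  have hd : (mm a b - 1, mm a b - 1) ∈ a := ((lt_mm_iff (a := a) (b := b)).1 (by omega)).1
  have : (mm a b - 1, j) ∈ a := a.up_left_mem le_rfl (by omega) hd
  have := mem_iff_lt_colLen.1 this
  omega

lemma mm_le_rowLen_b {j : ℕ} (h : j < mm a b) : mm a b ≤ b.rowLen j := by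
  have hd : (mm a b - 1, mm a b - 1) ∈ b := ((lt_mm_iff (a := a) (b := b)).1 (by omega)).2
  have : (j, mm a b - 1) ∈ b := b.up_left_mem (by omega) le_rfl hd
  have := mem_iff_lt_rowLen.1 this
  omega

lemma mm_le_colLen_b {j : ℕ} (h : j < mm a b) : mm a b ≤ b.colLen j := by
  have hd : (mm a b - 1, mm a b - 1) ∈ b := ((lt_mm_iff (a := a) (b := b)).1 (by omega)).2
  have : (mm a b - 1, j) ∈ b := b.up_left_mem le_rfl (by omega) hd
  have := mem_iff_lt_colLen.1 this
  omega

lemma diag_lt_a {i : ℕ} (h : i < mm a b) : i < a.rowLen i ∧ i < a.colLen i :=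
  ⟨mem_iff_lt_rowLen.1 (lt_mm_iff.1 h).1, mem_iff_lt_colLen.1 (lt_mm_iff.1 h).1⟩

lemma diag_lt_b {i : ℕ} (h : i < mm a b) : i < b.rowLen i ∧ i < b.colLen i :=
  ⟨mem_iff_lt_rowLen.1 (lt_mm_iff.1 h).2, mem_iff_lt_colLen.1 (lt_mm_iff.1 h).2⟩

/-- beyond the joint Durfee square, rows/columns of `a` are short if `b` has the diagonal cell -/
lemma a_small_of_b_diag {i : ℕ} (hm : mm a b ≤ i) (hb : (i, i) ∈ b) :
    a.rowLen i ≤ mm a b ∧ a.colLen i ≤ mm a b := by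
  constructor
  · by_contra hc
    have : (i, mm a b) ∈ a := mem_iff_lt_rowLen.2 (by omega)
    have hma : (mm a b, mm a b) ∈ a := a.up_left_mem hm le_rfl this
    have hmb : (mm a b, mm a b) ∈ b := b.up_left_mem hm hm hb
    have := lt_mm_iff.2 ⟨hma, hmb⟩
    omega
  · by_contra hc
    have : (mm a b, i) ∈ a := mem_iff_lt_colLen.2 (by omega)
    have hma : (mm a b, mm a b) ∈ a := a.up_left_mem le_rfl hm this
    have hmb : (mm a b, mm a b) ∈ b := b.up_left_mem hm hm hb
    have := lt_mm_iff.2 ⟨hma, hmb⟩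
    omega

lemma b_small_of_a_diag {i : ℕ} (hm : mm a b ≤ i) (ha : (i, i) ∈ a) :
    b.rowLen i ≤ mm a b ∧ b.colLen i ≤ mm a b := by
  constructor
  · by_contra hc
    have : (i, mm a b) ∈ b := mem_iff_lt_rowLen.2 (by omega)
    have hmb : (mm a b, mm a b) ∈ b := b.up_left_mem hm le_rfl this
    have hma : (mm a b, mm a b) ∈ a := a.up_left_mem hm hm ha
    have := lt_mm_iff.2 ⟨hma, hmb⟩
    omega
  · by_contra hc
    have : (mm a b, i) ∈ b := mem_iff_lt_colLen.2 (by omega)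
    have hmb : (mm a b, mm a b) ∈ b := b.up_left_mem le_rfl hm this
    have hma : (mm a b, mm a b) ∈ a := a.up_left_mem hm hm ha
    have := lt_mm_iff.2 ⟨hma, hmb⟩
    omega

variable (a b)

/-- horizontal strips: arms of the hooks of `b` grafted onto the rows of `a` -/
noncomputable def Hs : Finset (ℕ × ℕ) :=
  (range (mm a b)).biUnion (fun i =>
    (Ico (a.rowLen i) (a.rowLen i + (b.rowLen i - i))).image (fun c => (i, c)))

/-- vertical strips: legs of the hooks of `b` grafted onto the columns of `a` -/
noncomputable def Vs : Finset (ℕ × ℕ) :=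
  (range (mm a b)).biUnion (fun j =>
    (Ico (a.colLen j) (a.colLen j + (b.colLen j - (j + 1)))).image (fun r => (r, j)))

/-- body: the part of `b` beyond the joint Durfee square -/
noncomputable def Bs : Finset (ℕ × ℕ) :=
  b.cells.filter (fun c => mm a b ≤ c.1 ∧ mm a b ≤ c.2)

noncomputable def Dn : Finset (ℕ × ℕ) := Hs a b ∪ Vs a b ∪ Bs a b

variable {a b}

lemma mem_Hs {x : ℕ × ℕ} : x ∈ Hs a b ↔
    x.1 < mm a b ∧ a.rowLen x.1 ≤ x.2 ∧ x.2 < a.rowLen x.1 + (b.rowLen x.1 - x.1) := by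
  obtain ⟨r, c⟩ := x
  simp only [Hs, mem_biUnion, mem_range, mem_image, mem_Ico]
  constructor
  · rintro ⟨i, hi, j, hj, hje⟩
    obtain ⟨rfl, rfl⟩ := Prod.mk.inj hje.symm
    exact ⟨hi, hj.1, hj.2⟩
  · rintro ⟨h1, h2, h3⟩
    exact ⟨r, h1, c, ⟨h2, h3⟩, rfl⟩

lemma mem_Vs {x : ℕ × ℕ} : x ∈ Vs a b ↔
    x.2 < mm a b ∧ a.colLen x.2 ≤ x.1 ∧ x.1 < a.colLen x.2 + (b.colLen x.2 - (x.2 + 1)) := by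
  obtain ⟨r, c⟩ := x
  simp only [Vs, mem_biUnion, mem_range, mem_image, mem_Ico]
  constructor
  · rintro ⟨i, hi, j, hj, hje⟩
    obtain ⟨rfl, rfl⟩ := Prod.mk.inj hje.symm
    exact ⟨hi, hj.1, hj.2⟩
  · rintro ⟨h1, h2, h3⟩
    exact ⟨c, h1, r, ⟨h2, h3⟩, rfl⟩

lemma mem_Bs {x : ℕ × ℕ} : x ∈ Bs a b ↔
    x ∈ b ∧ mm a b ≤ x.1 ∧ mm a b ≤ x.2 := by
  simp only [Bs, mem_filter, mem_cells]

-- row ranges of the three pieces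
lemma Hs_row {x : ℕ × ℕ} (h : x ∈ Hs a b) : x.1 < mm a b := (mem_Hs.1 h).1

lemma Hs_col {x : ℕ × ℕ} (h : x ∈ Hs a b) : mm a b ≤ x.2 := by
  have h' := mem_Hs.1 h
  have := mm_le_rowLen_a (a := a) (b := b) h'.1
  omega

lemma Vs_row {x : ℕ × ℕ} (h : x ∈ Vs a b) : mm a b ≤ x.1 := by
  have h' := mem_Vs.1 h
  have := mm_le_colLen_a (a := a) (b := b) h'.1
  omega

lemma Vs_col {x : ℕ × ℕ} (h : x ∈ Vs a b) : x.2 < mm a b := (mem_Vs.1 h).1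

lemma Bs_row {x : ℕ × ℕ} (h : x ∈ Bs a b) : mm a b ≤ x.1 := (mem_Bs.1 h).2.1

lemma Bs_col {x : ℕ × ℕ} (h : x ∈ Bs a b) : mm a b ≤ x.2 := (mem_Bs.1 h).2.2

lemma mem_Dn {x : ℕ × ℕ} : x ∈ Dn a b ↔ x ∈ Hs a b ∨ x ∈ Vs a b ∨ x ∈ Bs a b := by
  simp [Dn, mem_union, or_assoc]

/-- classification of cells of `Dn` by position -/
lemma classify {x : ℕ × ℕ} (h : x ∈ Dn a b) :
    (x.1 < mm a b → x ∈ Hs a b) ∧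
    (mm a b ≤ x.1 → x.2 < mm a b → x ∈ Vs a b) ∧
    (mm a b ≤ x.1 → mm a b ≤ x.2 → x ∈ Bs a b) := by
  rw [mem_Dn] at h
  refine ⟨fun h1 => ?_, fun h1 h2 => ?_, fun h1 h2 => ?_⟩
  · rcases h with h | h | h
    · exact h
    · have := Vs_row h; omega
    · have := Bs_row h; omega
  · rcases h with h | h | h
    · have := Hs_row h; omega
    · exact h
    · have := Bs_col h; omega
  · rcases h with h | h | h
    · have := Hs_row h; omega
    · have := Vs_col h; omega
    · exact h

lemma Hs_not_mem_a {x : ℕ × ℕ} (h : x ∈ Hs a b) : x ∉ a := by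
  have h' := mem_Hs.1 h
  intro hc
  have := mem_iff_lt_rowLen.1 hc
  omega

lemma Vs_not_mem_a {x : ℕ × ℕ} (h : x ∈ Vs a b) : x ∉ a := by
  have h' := mem_Vs.1 h
  intro hc
  have := mem_iff_lt_colLen.1 hc
  omega

lemma Bs_not_mem_a {x : ℕ × ℕ} (h : x ∈ Bs a b) : x ∉ a := by
  have h' := mem_Bs.1 h
  intro hc
  have hma : (mm a b, mm a b) ∈ a := a.up_left_mem h'.2.1 h'.2.2 hc
  have hmb : (mm a b, mm a b) ∈ b := b.up_left_mem h'.2.1 h'.2.2 h'.1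
  have := lt_mm_iff.2 ⟨hma, hmb⟩
  omega

lemma Dn_not_mem_a {x : ℕ × ℕ} (h : x ∈ Dn a b) : x ∉ a := by
  rcases mem_Dn.1 h with h | h | h
  exacts [Hs_not_mem_a h, Vs_not_mem_a h, Bs_not_mem_a h]


variable {a b : YoungDiagram}

lemma mem_Hs' {r c : ℕ} : (r, c) ∈ Hs a b ↔
    r < mm a b ∧ a.rowLen r ≤ c ∧ c < a.rowLen r + (b.rowLen r - r) := by
  simpa using mem_Hs (a := a) (b := b) (x := (r, c))

lemma mem_Vs' {r c : ℕ} : (r, c) ∈ Vs a b ↔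
    c < mm a b ∧ a.colLen c ≤ r ∧ r < a.colLen c + (b.colLen c - (c + 1)) := by
  simpa using mem_Vs (a := a) (b := b) (x := (r, c))

lemma mem_Bs' {r c : ℕ} : (r, c) ∈ Bs a b ↔
    (r, c) ∈ b ∧ mm a b ≤ r ∧ mm a b ≤ c := by
  simpa using mem_Bs (a := a) (b := b) (x := (r, c))

/-- one-step up closure -/
lemma nu_up {r c : ℕ} (h : (r + 1, c) ∈ a.cells ∪ Dn a b) : (r, c) ∈ a.cells ∪ Dn a b := by
  set m := mm a b with hm
  rcases mem_union.1 h with h | h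
  · exact mem_union_left _ (by exact a.up_left_mem (Nat.le_succ r) le_rfl (by exact h))
  · rcases mem_Dn.1 h with h | h | h
    · -- Hs
      obtain ⟨h1, h2, h3⟩ := mem_Hs'.1 h
      by_cases hc : c < a.rowLen r
      · exact mem_union_left _ (by exact mem_iff_lt_rowLen.2 hc)
      · refine mem_union_right _ (mem_Dn.2 (Or.inl (mem_Hs'.2 ?_)))
        refine ⟨by omega, by omega, ?_⟩
        have e1 : a.rowLen (r + 1) ≤ a.rowLen r := a.rowLen_anti _ _ (by omega)
        have e2 : b.rowLen (r + 1) ≤ b.rowLen r := b.rowLen_anti _ _ (by omega)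
        have e3 := (diag_lt_b (a := a) (b := b) (i := r + 1) h1).1
        omega
    · -- Vs
      obtain ⟨h1, h2, h3⟩ := mem_Vs'.1 h
      by_cases hc : r < a.colLen c
      · exact mem_union_left _ (by exact mem_iff_lt_colLen.2 hc)
      · refine mem_union_right _ (mem_Dn.2 (Or.inr (Or.inl (mem_Vs'.2 ?_))))
        exact ⟨h1, by omega, by omega⟩
    · -- Bs
      obtain ⟨h1, h2, h3⟩ := mem_Bs'.1 h
      have hb : (r, c) ∈ b := b.up_left_mem (by omega) le_rfl h1
      by_cases hr : m ≤ r
      · exact mem_union_right _ (mem_Dn.2 (Or.inr (Or.inr (mem_Bs'.2 ⟨hb, hr, h3⟩))))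
      · have hrm : r + 1 = m := by omega
        by_cases hc : c < a.rowLen r
        · exact mem_union_left _ (by exact mem_iff_lt_rowLen.2 hc)
        · refine mem_union_right _ (mem_Dn.2 (Or.inl (mem_Hs'.2 ?_)))
          refine ⟨by omega, by omega, ?_⟩
          have e1 : mm a b ≤ a.rowLen r := mm_le_rowLen_a (j := r) (by omega)
          have e2 : b.rowLen (r + 1) ≤ b.rowLen r := b.rowLen_anti _ _ (by omega)
          have e3 : mm a b ≤ b.rowLen r := mm_le_rowLen_b (j := r) (by omega)
          have e4 : c < b.rowLen (r + 1) := mem_iff_lt_rowLen.1 h1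
          omega

/-- one-step left closure -/
lemma nu_left {r c : ℕ} (h : (r, c + 1) ∈ a.cells ∪ Dn a b) : (r, c) ∈ a.cells ∪ Dn a b := by
  set m := mm a b with hm
  rcases mem_union.1 h with h | h
  · exact mem_union_left _ (by exact a.up_left_mem le_rfl (Nat.le_succ c) (by exact h))
  · rcases mem_Dn.1 h with h | h | h
    · -- Hs
      obtain ⟨h1, h2, h3⟩ := mem_Hs'.1 h
      by_cases hc : c < a.rowLen r
      · exact mem_union_left _ (by exact mem_iff_lt_rowLen.2 hc)
      · refine mem_union_right _ (mem_Dn.2 (Or.inl (mem_Hs'.2 ?_)))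
        exact ⟨h1, by omega, by omega⟩
    · -- Vs
      obtain ⟨h1, h2, h3⟩ := mem_Vs'.1 h
      by_cases hc : r < a.colLen c
      · exact mem_union_left _ (by exact mem_iff_lt_colLen.2 hc)
      · refine mem_union_right _ (mem_Dn.2 (Or.inr (Or.inl (mem_Vs'.2 ?_))))
        refine ⟨by omega, by omega, ?_⟩
        have e1 : a.colLen (c + 1) ≤ a.colLen c := a.colLen_anti _ _ (by omega)
        have e2 : b.colLen (c + 1) ≤ b.colLen c := b.colLen_anti _ _ (by omega)
        have e3 := (diag_lt_b (a := a) (b := b) (i := c + 1) h1).2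
        omega
    · -- Bs
      obtain ⟨h1, h2, h3⟩ := mem_Bs'.1 h
      have hb : (r, c) ∈ b := b.up_left_mem le_rfl (by omega) h1
      by_cases hc : m ≤ c
      · exact mem_union_right _ (mem_Dn.2 (Or.inr (Or.inr (mem_Bs'.2 ⟨hb, h2, hc⟩))))
      · have hcm : c + 1 = m := by omega
        by_cases hr : r < a.colLen c
        · exact mem_union_left _ (by exact mem_iff_lt_colLen.2 hr)
        · refine mem_union_right _ (mem_Dn.2 (Or.inr (Or.inl (mem_Vs'.2 ?_))))
          refine ⟨by omega, by omega, ?_⟩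
          have e1 : mm a b ≤ a.colLen c := mm_le_colLen_a (j := c) (by omega)
          have e2 : b.colLen (c + 1) ≤ b.colLen c := b.colLen_anti _ _ (by omega)
          have e3 : mm a b ≤ b.colLen c := mm_le_colLen_b (j := c) (by omega)
          have e4 : r < b.colLen (c + 1) := mem_iff_lt_colLen.1 h1
          omega

lemma nu_lower : IsLowerSet (↑(a.cells ∪ Dn a b) : Set (ℕ × ℕ)) := by
  rintro ⟨r, c⟩ ⟨r', c'⟩ ⟨hr, hc⟩ hmem
  simp only [Finset.mem_coe] at hmem ⊢
  simp only at hr hc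
  have hrow : ∀ k, (r - k, c) ∈ a.cells ∪ Dn a b := by
    intro k
    induction k with
    | zero => simpa using hmem
    | succ k ih =>
      rcases Nat.eq_zero_or_pos (r - k) with h0 | h0
      · have : r - (k + 1) = r - k := by omega
        rw [this]; exact ih
      · have : r - k = (r - (k + 1)) + 1 := by omega
        rw [this] at ih
        exact nu_up ih
  have hcol : ∀ k, (r', c - k) ∈ a.cells ∪ Dn a b := by
    intro k
    induction k with
    | zero =>
      have : r' = r - (r - r') := by omega
      rw [this]
      simpa using hrow (r - r')
    | succ k ih =>
      rcases Nat.eq_zero_or_pos (c - k) with h0 | h0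
      · have : c - (k + 1) = c - k := by omega
        rw [this]; exact ih
      · have : c - k = (c - (k + 1)) + 1 := by omega
        rw [this] at ih
        exact nu_left ih
  have : c' = c - (c - c') := by omega
  rw [this]
  exact hcol (c - c')

variable (a b)

/-- the Young diagram attaining the maximum -/
noncomputable def nuD : YoungDiagram := ⟨a.cells ∪ Dn a b, nu_lower⟩

variable {a b}

lemma mem_nuD {x : ℕ × ℕ} : x ∈ nuD a b ↔ x ∈ a ∨ x ∈ Dn a b := by
  show x ∈ a.cells ∪ Dn a b ↔ _
  rw [mem_union, mem_cells]

lemma skew_nuD : skewCells (nuD a b) a = Dn a b := by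
  ext x
  simp only [skewCells, mem_sdiff, mem_cells]
  constructor
  · rintro ⟨h1, h2⟩
    rcases mem_nuD.1 (by exact h1) with h | h
    · exact absurd h h2
    · exact h
  · intro h
    exact ⟨by exact mem_nuD.2 (Or.inr h), fun hc => Dn_not_mem_a h hc⟩


variable {a b : YoungDiagram}

lemma nuD_rowLen_lt {i : ℕ} (hi : i < mm a b) :
    (nuD a b).rowLen i = a.rowLen i + (b.rowLen i - i) := by
  apply rowLen_eq_of
  intro j
  rw [mem_nuD]
  constructor
  · rintro (h | h)
    · have := mem_iff_lt_rowLen.1 h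
      omega
    · rcases mem_Dn.1 h with h | h | h
      · have := mem_Hs'.1 h
        omega
      · have h' := mem_Vs'.1 h
        have := mm_le_colLen_a (a := a) (b := b) h'.1
        omega
      · have := Bs_row h
        simp only at this
        omega
  · intro hj
    by_cases hja : j < a.rowLen i
    · exact Or.inl (mem_iff_lt_rowLen.2 hja)
    · exact Or.inr (mem_Dn.2 (Or.inl (mem_Hs'.2 ⟨hi, by omega, by omega⟩)))

lemma nuD_colLen_lt {i : ℕ} (hi : i < mm a b) :
    (nuD a b).colLen i = a.colLen i + (b.colLen i - (i + 1)) := by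
  apply colLen_eq_of
  intro j
  rw [mem_nuD]
  constructor
  · rintro (h | h)
    · have := mem_iff_lt_colLen.1 h
      omega
    · rcases mem_Dn.1 h with h | h | h
      · have h' := mem_Hs'.1 h
        have := mm_le_rowLen_a (a := a) (b := b) h'.1
        omega
      · have := mem_Vs'.1 h
        omega
      · have := Bs_col h
        simp only at this
        omega
  · intro hj
    by_cases hja : j < a.colLen i
    · exact Or.inl (mem_iff_lt_colLen.2 hja)
    · exact Or.inr (mem_Dn.2 (Or.inr (Or.inl (mem_Vs'.2 ⟨hi, by omega, by omega⟩))))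

lemma nuD_rowLen_A {i : ℕ} (hm : mm a b ≤ i) (ha : (i, i) ∈ a) :
    (nuD a b).rowLen i = a.rowLen i := by
  apply rowLen_eq_of
  intro j
  rw [mem_nuD, ← mem_iff_lt_rowLen]
  constructor
  · rintro (h | h)
    · exact h
    · exfalso
      rcases mem_Dn.1 h with h | h | h
      · have := Hs_row h
        simp only at this
        omega
      · obtain ⟨h1, h2, h3⟩ := mem_Vs'.1 h
        have e1 : i < a.colLen i := mem_iff_lt_colLen.1 ha
        have e2 : a.colLen i ≤ a.colLen j := a.colLen_anti _ _ (by omega)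
        omega
      · obtain ⟨h1, h2, h3⟩ := mem_Bs'.1 h
        have hma : (mm a b, mm a b) ∈ a := a.up_left_mem hm hm ha
        have hmb : (mm a b, mm a b) ∈ b := b.up_left_mem h2 h3 h1
        have := lt_mm_iff.2 ⟨hma, hmb⟩
        omega
  · exact Or.inl

lemma nuD_colLen_A {i : ℕ} (hm : mm a b ≤ i) (ha : (i, i) ∈ a) :
    (nuD a b).colLen i = a.colLen i := by
  apply colLen_eq_of
  intro j
  rw [mem_nuD, ← mem_iff_lt_colLen]
  constructor
  · rintro (h | h)
    · exact h
    · exfalso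
      rcases mem_Dn.1 h with h | h | h
      · obtain ⟨h1, h2, h3⟩ := mem_Hs'.1 h
        have e1 : i < a.rowLen i := mem_iff_lt_rowLen.1 ha
        have e2 : a.rowLen i ≤ a.rowLen j := a.rowLen_anti _ _ (by omega)
        omega
      · have := Vs_col h
        simp only at this
        omega
      · obtain ⟨h1, h2, h3⟩ := mem_Bs'.1 h
        have hma : (mm a b, mm a b) ∈ a := a.up_left_mem hm hm ha
        have hmb : (mm a b, mm a b) ∈ b := b.up_left_mem h2 h3 h1
        have := lt_mm_iff.2 ⟨hma, hmb⟩
        omega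
  · exact Or.inl

lemma nuD_rowLen_B {i : ℕ} (hm : mm a b ≤ i) (hb : (i, i) ∈ b) :
    (nuD a b).rowLen i = b.rowLen i := by
  have hsmall := a_small_of_b_diag hm hb
  have hib : i < b.rowLen i := mem_iff_lt_rowLen.1 hb
  have hib' : i < b.colLen i := mem_iff_lt_colLen.1 hb
  apply rowLen_eq_of
  intro j
  rw [mem_nuD]
  constructor
  · rintro (h | h)
    · have := mem_iff_lt_rowLen.1 h
      omega
    · rcases mem_Dn.1 h with h | h | h
      · have := Hs_row h
        simp only at this
        omega
      · obtain ⟨h1, h2, h3⟩ := mem_Vs'.1 h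
        -- j < m ≤ i < b.rowLen i; enough: j < b.rowLen i
        omega
      · obtain ⟨h1, h2, h3⟩ := mem_Bs'.1 h
        have := mem_iff_lt_rowLen.1 h1
        omega
  · intro hj
    by_cases hja : j < a.rowLen i
    · exact Or.inl (mem_iff_lt_rowLen.2 hja)
    · right
      by_cases hjm : j < mm a b
      · -- vertical strip cell
        refine mem_Dn.2 (Or.inr (Or.inl (mem_Vs'.2 ⟨hjm, ?_, ?_⟩)))
        · have : ¬ ((i, j) ∈ a) := fun hc => hja (mem_iff_lt_rowLen.1 hc)
          rw [mem_iff_lt_colLen] at this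
          omega
        · have e1 : mm a b ≤ a.colLen j := mm_le_colLen_a hjm
          have e2 : b.colLen j ≥ b.colLen i := b.colLen_anti _ _ (by omega)
          omega
      · -- body cell
        refine mem_Dn.2 (Or.inr (Or.inr (mem_Bs'.2 ⟨mem_iff_lt_rowLen.2 (by omega), hm, by omega⟩)))

lemma nuD_colLen_B {i : ℕ} (hm : mm a b ≤ i) (hb : (i, i) ∈ b) :
    (nuD a b).colLen i = b.colLen i := by
  have hsmall := a_small_of_b_diag hm hb
  have hib : i < b.rowLen i := mem_iff_lt_rowLen.1 hb
  have hib' : i < b.colLen i := mem_iff_lt_colLen.1 hb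
  apply colLen_eq_of
  intro j
  rw [mem_nuD]
  constructor
  · rintro (h | h)
    · have := mem_iff_lt_colLen.1 h
      omega
    · rcases mem_Dn.1 h with h | h | h
      · obtain ⟨h1, h2, h3⟩ := mem_Hs'.1 h
        omega
      · have := Vs_col h
        simp only at this
        omega
      · obtain ⟨h1, h2, h3⟩ := mem_Bs'.1 h
        have := mem_iff_lt_colLen.1 h1
        omega
  · intro hj
    by_cases hja : j < a.colLen i
    · exact Or.inl (mem_iff_lt_colLen.2 hja)
    · right
      by_cases hjm : j < mm a b
      · refine mem_Dn.2 (Or.inl (mem_Hs'.2 ⟨hjm, ?_, ?_⟩))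
        · have : ¬ ((j, i) ∈ a) := fun hc => hja (mem_iff_lt_colLen.1 hc)
          rw [mem_iff_lt_rowLen] at this
          omega
        · have e1 : mm a b ≤ a.rowLen j := mm_le_rowLen_a hjm
          have e2 : b.rowLen j ≥ b.rowLen i := b.rowLen_anti _ _ (by omega)
          omega
      · refine mem_Dn.2 (Or.inr (Or.inr (mem_Bs'.2 ⟨mem_iff_lt_colLen.2 (by omega), by omega, hm⟩)))

lemma nuD_diag_C {i : ℕ} (hm : mm a b ≤ i) (ha : (i, i) ∉ a) (hb : (i, i) ∉ b) :
    (i, i) ∉ nuD a b := by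
  intro hc
  rcases mem_nuD.1 hc with h | h
  · exact ha h
  · rcases mem_Dn.1 h with h | h | h
    · have := Hs_row h
      have h' := mem_Hs'.1 h
      have := mm_le_rowLen_a (a := a) (b := b) h'.1
      omega
    · have h' := mem_Vs'.1 h
      have := mm_le_colLen_a (a := a) (b := b) h'.1
      omega
    · exact hb (mem_Bs'.1 h).1

lemma hl_nuD (i : ℕ) : hl (nuD a b) i = hl a i + hl b i := by
  rcases lt_or_ge i (mm a b) with hi | hi
  · have h1 := nuD_rowLen_lt (a := a) (b := b) hi
    have h2 := nuD_colLen_lt (a := a) (b := b) hi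
    have d1 := diag_lt_a (a := a) (b := b) hi
    have d2 := diag_lt_b (a := a) (b := b) hi
    unfold hl
    rw [h1, h2]
    omega
  · by_cases ha : (i, i) ∈ a
    · have h1 := nuD_rowLen_A (a := a) (b := b) hi ha
      have h2 := nuD_colLen_A (a := a) (b := b) hi ha
      have hb : (i, i) ∉ b := fun hc => by have := lt_mm_iff.2 ⟨ha, hc⟩; omega
      rw [hl_eq_zero (l := b) hb]
      unfold hl
      rw [h1, h2]
      omega
    · by_cases hb : (i, i) ∈ b
      · have h1 := nuD_rowLen_B (a := a) (b := b) hi hb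
        have h2 := nuD_colLen_B (a := a) (b := b) hi hb
        rw [hl_eq_zero (l := a) ha]
        unfold hl
        rw [h1, h2]
        omega
      · rw [hl_eq_zero (l := a) ha, hl_eq_zero (l := b) hb,
          hl_eq_zero (nuD_diag_C hi ha hb)]


variable {a b : YoungDiagram}

/-- the canonical LR filling of `Dn` -/
noncomputable def Tf (a b : YoungDiagram) : ℕ × ℕ → ℕ := fun x =>
  if x ∈ Vs a b then x.2 + 2 + (x.1 - a.colLen x.2)
  else if x ∈ Hs a b ∨ x ∈ Bs a b then x.1 + 1 else 0

lemma disj_HV : ∀ x, x ∈ Hs a b → x ∈ Vs a b → False := fun x h1 h2 => by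
  have := Hs_row h1; have := Vs_row h2; omega

lemma disj_HB : ∀ x, x ∈ Hs a b → x ∈ Bs a b → False := fun x h1 h2 => by
  have := Hs_row h1; have := Bs_row h2; omega

lemma disj_VB : ∀ x, x ∈ Vs a b → x ∈ Bs a b → False := fun x h1 h2 => by
  have := Vs_col h1; have := Bs_col h2; omega

lemma Tf_V {x : ℕ × ℕ} (h : x ∈ Vs a b) : Tf a b x = x.2 + 2 + (x.1 - a.colLen x.2) := by
  simp only [Tf, if_pos h]

lemma Tf_H {x : ℕ × ℕ} (h : x ∈ Hs a b) : Tf a b x = x.1 + 1 := by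
  have : x ∉ Vs a b := fun hc => disj_HV x h hc
  simp only [Tf, if_neg this, if_pos (Or.inl h)]

lemma Tf_B {x : ℕ × ℕ} (h : x ∈ Bs a b) : Tf a b x = x.1 + 1 := by
  have : x ∉ Vs a b := fun hc => disj_VB x hc h
  simp only [Tf, if_neg this, if_pos (Or.inr h)]

lemma Tf_out {x : ℕ × ℕ} (h : x ∉ Dn a b) : Tf a b x = 0 := by
  rw [mem_Dn] at h
  push_neg at h
  simp only [Tf]
  rw [if_neg h.2.1, if_neg (show ¬ (x ∈ Hs a b ∨ x ∈ Bs a b) by tauto)]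

lemma Tf_pos {x : ℕ × ℕ} (h : x ∈ Dn a b) : 1 ≤ Tf a b x := by
  rcases mem_Dn.1 h with h | h | h
  · rw [Tf_H h]; omega
  · rw [Tf_V h]; omega
  · rw [Tf_B h]; omega

lemma Tf_row_mono : ∀ i j, (i, j) ∈ Dn a b → (i, j + 1) ∈ Dn a b →
    Tf a b (i, j) ≤ Tf a b (i, j + 1) := by
  intro i j h1 h2
  set m := mm a b with hm
  rcases lt_or_ge i m with hi | hi
  · have e1 := (classify h1).1 hi
    have e2 := (classify h2).1 hi
    rw [Tf_H e1, Tf_H e2]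
  · rcases lt_or_ge (j + 1) m with hj | hj
    · have e1 := (classify h1).2.1 hi (by omega)
      have e2 := (classify h2).2.1 hi hj
      rw [Tf_V e1, Tf_V e2]
      obtain ⟨f1, f2, f3⟩ := mem_Vs'.1 e1
      obtain ⟨g1, g2, g3⟩ := mem_Vs'.1 e2
      have : a.colLen (j + 1) ≤ a.colLen j := a.colLen_anti _ _ (by omega)
      simp only
      omega
    · rcases lt_or_ge j m with hj' | hj'
      · -- left in Vs, right in Bs
        have e1 := (classify h1).2.1 hi hj'
        have e2 := (classify h2).2.2 hi hj
        rw [Tf_V e1, Tf_B e2]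
        obtain ⟨f1, f2, f3⟩ := mem_Vs'.1 e1
        have : m ≤ a.colLen j := mm_le_colLen_a hj'
        simp only
        omega
      · have e1 := (classify h1).2.2 hi hj'
        have e2 := (classify h2).2.2 hi (by omega)
        rw [Tf_B e1, Tf_B e2]

lemma Tf_col_strict : ∀ i j, (i, j) ∈ Dn a b → (i + 1, j) ∈ Dn a b →
    Tf a b (i, j) < Tf a b (i + 1, j) := by
  intro i j h1 h2
  set m := mm a b with hm
  rcases lt_or_ge i m with hi | hi
  · have e1 := (classify h1).1 hi
    rcases lt_or_ge (i + 1) m with hi2 | hi2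
    · have e2 := (classify h2).1 hi2
      rw [Tf_H e1, Tf_H e2]
      omega
    · -- upper cell is in Bs : its column is ≥ m since j ≥ rowLen a i ≥ m
      have hcol : m ≤ j := by
        have := (mem_Hs'.1 e1).2.1
        have := mm_le_rowLen_a (a := a) (b := b) (j := i) hi
        omega
      have e2 := (classify h2).2.2 hi2 hcol
      rw [Tf_H e1, Tf_B e2]
      omega
  · rcases lt_or_ge j m with hj | hj
    · have e1 := (classify h1).2.1 hi hj
      have e2 := (classify h2).2.1 (by omega) hj
      rw [Tf_V e1, Tf_V e2]
      obtain ⟨f1, f2, f3⟩ := mem_Vs'.1 e1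
      simp only
      omega
    · have e1 := (classify h1).2.2 hi hj
      have e2 := (classify h2).2.2 (by omega) hj
      rw [Tf_B e1, Tf_B e2]
      omega

lemma cH_eq (k : ℕ) : ((Hs a b).filter (fun x => Tf a b x = k + 1)).card
    = if k < mm a b then b.rowLen k - k else 0 := by
  split_ifs with hk
  · have heq : (Hs a b).filter (fun x => Tf a b x = k + 1) =
        (Ico (a.rowLen k) (a.rowLen k + (b.rowLen k - k))).image (fun c => (k, c)) := by
      ext ⟨r, c⟩
      simp only [mem_filter, mem_image, mem_Ico]
      constructor
      · rintro ⟨hmem, hval⟩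
        rw [Tf_H hmem] at hval
        obtain ⟨f1, f2, f3⟩ := mem_Hs'.1 hmem
        have hr : r = k := by simpa using hval
        subst hr
        exact ⟨c, ⟨f2, f3⟩, rfl⟩
      · rintro ⟨c', hc', hce⟩
        obtain ⟨hr, hcc⟩ := Prod.mk.inj hce
        subst hr
        subst hcc
        have hmem : (k, c') ∈ Hs a b := mem_Hs'.2 ⟨hk, hc'.1, hc'.2⟩
        rw [Tf_H hmem]
        exact ⟨hmem, rfl⟩
    rw [heq, card_image_of_injective _ (fun x y h => by simpa using h), Nat.card_Ico]
    omega
  · rw [Finset.card_eq_zero, Finset.filter_eq_empty_iff]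
    intro x hx
    rw [Tf_H hx]
    have := Hs_row hx
    omega

lemma cV_eq (k : ℕ) : ((Vs a b).filter (fun x => Tf a b x = k + 1)).card
    = min (mm a b) (min k (b.rowLen k)) := by
  have heq : (Vs a b).filter (fun x => Tf a b x = k + 1) =
      (range (min (mm a b) (min k (b.rowLen k)))).image
        (fun j => (a.colLen j + (k - (j + 1)), j)) := by
    ext ⟨r, j⟩
    simp only [mem_filter, mem_image, mem_range]
    constructor
    · rintro ⟨hmem, hval⟩
      rw [Tf_V hmem] at hval
      obtain ⟨f1, f2, f3⟩ := mem_Vs'.1 hmem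
      simp only at hval
      have hjk : j < k := by omega
      have hr : r = a.colLen j + (k - (j + 1)) := by omega
      have hkb : k < b.colLen j := by omega
      have hjrb : j < b.rowLen k := mem_iff_lt_rowLen.1 (mem_iff_lt_colLen.2 hkb)
      exact ⟨j, by omega, by rw [hr]⟩
    · rintro ⟨j', hj', hje⟩
      obtain ⟨hr, hcc⟩ := Prod.mk.inj hje
      subst hr
      subst hcc
      have hjm : j' < mm a b := by omega
      have hjk : j' < k := by omega
      have hjrb : j' < b.rowLen k := by omega
      have hkb : k < b.colLen j' := mem_iff_lt_colLen.1 (mem_iff_lt_rowLen.2 hjrb)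
      have hmem : (a.colLen j' + (k - (j' + 1)), j') ∈ Vs a b :=
        mem_Vs'.2 ⟨hjm, by omega, by omega⟩
      refine ⟨hmem, ?_⟩
      rw [Tf_V hmem]
      simp only
      omega
  rw [heq, card_image_of_injective _ (fun x y h => by simpa using (Prod.mk.inj h).2),
    card_range]

lemma cB_eq (k : ℕ) : ((Bs a b).filter (fun x => Tf a b x = k + 1)).card
    = if mm a b ≤ k then b.rowLen k - mm a b else 0 := by
  split_ifs with hk
  · have heq : (Bs a b).filter (fun x => Tf a b x = k + 1) =
        (Ico (mm a b) (b.rowLen k)).image (fun c => (k, c)) := by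
      ext ⟨r, c⟩
      simp only [mem_filter, mem_image, mem_Ico]
      constructor
      · rintro ⟨hmem, hval⟩
        rw [Tf_B hmem] at hval
        obtain ⟨f1, f2, f3⟩ := mem_Bs'.1 hmem
        have hr : r = k := by simpa using hval
        subst hr
        exact ⟨c, ⟨f3, mem_iff_lt_rowLen.1 f1⟩, rfl⟩
      · rintro ⟨c', hc', hce⟩
        obtain ⟨hr, hcc⟩ := Prod.mk.inj hce
        subst hr
        subst hcc
        have hmem : (k, c') ∈ Bs a b :=
          mem_Bs'.2 ⟨mem_iff_lt_rowLen.2 hc'.2, hk, hc'.1⟩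
        rw [Tf_B hmem]
        exact ⟨hmem, rfl⟩
    rw [heq, card_image_of_injective _ (fun x y h => by simpa using h), Nat.card_Ico]
  · rw [Finset.card_eq_zero, Finset.filter_eq_empty_iff]
    intro x hx
    rw [Tf_B hx]
    have := Bs_row hx
    omega

lemma Tf_content (k : ℕ) : ((Dn a b).filter (fun x => Tf a b x = k + 1)).card
    = b.rowLen k := by
  have hsplit : (Dn a b).filter (fun x => Tf a b x = k + 1) =
      ((Hs a b).filter (fun x => Tf a b x = k + 1)) ∪
      ((Vs a b).filter (fun x => Tf a b x = k + 1)) ∪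
      ((Bs a b).filter (fun x => Tf a b x = k + 1)) := by
    simp only [Dn, filter_union]
  rw [hsplit, card_union_of_disjoint, card_union_of_disjoint]
  · rw [cH_eq, cV_eq, cB_eq]
    rcases lt_or_ge k (mm a b) with hk | hk
    · have h1 := (diag_lt_b (a := a) (b := b) hk).1
      rw [if_pos hk, if_neg (by omega)]
      omega
    · rw [if_neg (by omega), if_pos hk]
      omega
  · rw [Finset.disjoint_left]
    intro x h1 h2
    exact disj_HV x (mem_filter.1 h1).1 (mem_filter.1 h2).1
  · rw [Finset.disjoint_left]
    intro x h1 h2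
    rcases mem_union.1 h1 with h1 | h1
    · exact disj_HB x (mem_filter.1 h1).1 (mem_filter.1 h2).1
    · exact disj_VB x (mem_filter.1 h1).1 (mem_filter.1 h2).1


variable {a b : YoungDiagram}

noncomputable def phiF (a b : YoungDiagram) : ℕ × ℕ → ℕ × ℕ := fun x =>
  if x.1 < mm a b then (x.1 - 1, a.rowLen (x.1 - 1) + (x.2 - a.rowLen x.1))
  else if x.2 < mm a b then
    (if x.1 = a.colLen x.2 then (x.2, a.rowLen x.2 + (b.rowLen x.2 - x.2) - 1)
     else (x.1 - 1, x.2))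
  else if x.1 = mm a b then (mm a b - 1, a.rowLen (mm a b - 1) + (x.2 - mm a b))
  else (x.1 - 1, x.2)

noncomputable def psiF (a b : YoungDiagram) : ℕ × ℕ → ℕ × ℕ := fun y =>
  if y.1 < mm a b then
    (if y.2 = a.rowLen y.1 + (b.rowLen y.1 - y.1) - 1 then (a.colLen y.1, y.1)
     else if y.1 = mm a b - 1 then (mm a b, mm a b + (y.2 - a.rowLen (mm a b - 1)))
     else (y.1 + 1, a.rowLen (y.1 + 1) + (y.2 - a.rowLen y.1)))
  else (y.1 + 1, y.2)

lemma phi_spec {i j k r c : ℕ} (hD : (r, c) ∈ Dn a b)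
    (hP : r < i ∨ (r = i ∧ j ≤ c)) (hval : Tf a b (r, c) = k + 2) :
    phiF a b (r, c) ∈ Dn a b ∧
    ((phiF a b (r, c)).1 < i ∨ ((phiF a b (r, c)).1 = i ∧ j ≤ (phiF a b (r, c)).2)) ∧
    Tf a b (phiF a b (r, c)) = k + 1 ∧
    psiF a b (phiF a b (r, c)) = (r, c) := by
  rcases lt_or_ge r (mm a b) with hr | hr
  · -- CASE 1 : horizontal strip
    have hH := (classify hD).1 hr
    obtain ⟨f1, f2, f3⟩ := mem_Hs'.1 hH
    have hval' : r + 1 = k + 2 := by rw [Tf_H hH] at hval; exact hval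
    have hr1 : 1 ≤ r := by omega
    have hφ : phiF a b (r, c) = (r - 1, a.rowLen (r - 1) + (c - a.rowLen r)) := by
      simp only [phiF]
      rw [if_pos hr]
    have e1 : a.rowLen r ≤ a.rowLen (r - 1) := a.rowLen_anti _ _ (by omega)
    have e2 : b.rowLen r ≤ b.rowLen (r - 1) := b.rowLen_anti _ _ (by omega)
    have e3 : r - 1 < mm a b := by omega
    have e4 : r < b.rowLen r := (diag_lt_b (a := a) (b := b) hr).1
    have hmem : (r - 1, a.rowLen (r - 1) + (c - a.rowLen r)) ∈ Hs a b :=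
      mem_Hs'.2 ⟨e3, by omega, by omega⟩
    rw [hφ]
    refine ⟨mem_Dn.2 (Or.inl hmem), Or.inl (by simp only; omega), ?_, ?_⟩
    · rw [Tf_H hmem]
      simp only
      omega
    · simp only [psiF]
      rw [if_pos (show r - 1 < mm a b from e3),
        if_neg (show ¬ (a.rowLen (r - 1) + (c - a.rowLen r) =
          a.rowLen (r - 1) + (b.rowLen (r - 1) - (r - 1)) - 1) by omega),
        if_neg (show ¬ (r - 1 = mm a b - 1) by omega)]
      have hr' : r - 1 + 1 = r := by omega
      rw [hr']
      exact Prod.ext (by simp only) (by simp only; omega)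
  · rcases lt_or_ge c (mm a b) with hc | hc
    · -- CASE 2 : vertical strip
      have hV := (classify hD).2.1 hr hc
      obtain ⟨f1, f2, f3⟩ := mem_Vs'.1 hV
      have hval' : c + 2 + (r - a.colLen c) = k + 2 := by rw [Tf_V hV] at hval; exact hval
      have hca : mm a b ≤ a.colLen c := mm_le_colLen_a hc
      by_cases htop : r = a.colLen c
      · -- top of the strip
        have hck : c = k := by omega
        have hφ : phiF a b (r, c) = (c, a.rowLen c + (b.rowLen c - c) - 1) := by
          simp only [phiF]
          rw [if_neg (show ¬ r < mm a b by omega), if_pos hc, if_pos htop]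
        have e4 : c < b.rowLen c := (diag_lt_b (a := a) (b := b) hc).1
        have hmem : (c, a.rowLen c + (b.rowLen c - c) - 1) ∈ Hs a b :=
          mem_Hs'.2 ⟨hc, by omega, by omega⟩
        rw [hφ]
        refine ⟨mem_Dn.2 (Or.inl hmem), Or.inl (by simp only; omega), ?_, ?_⟩
        · rw [Tf_H hmem]
          simp only
          omega
        · simp only [psiF]
          rw [if_pos (show c < mm a b from hc), if_pos trivial]
          exact Prod.ext (by simp only; omega) (by simp only)
      · -- interior of the strip
        have hφ : phiF a b (r, c) = (r - 1, c) := by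
          simp only [phiF]
          rw [if_neg (show ¬ r < mm a b by omega), if_pos hc, if_neg htop]
        have hmem : (r - 1, c) ∈ Vs a b := mem_Vs'.2 ⟨hc, by omega, by omega⟩
        rw [hφ]
        refine ⟨mem_Dn.2 (Or.inr (Or.inl hmem)), Or.inl (by simp only; omega), ?_, ?_⟩
        · rw [Tf_V hmem]
          simp only
          omega
        · simp only [psiF]
          rw [if_neg (show ¬ (r - 1 < mm a b) by omega)]
          exact Prod.ext (by simp only; omega) (by simp only)
    · -- CASE 3 : body
      have hB := (classify hD).2.2 hr hc
      obtain ⟨f1, f2, f3⟩ := mem_Bs'.1 hB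
      have hval' : r + 1 = k + 2 := by rw [Tf_B hB] at hval; exact hval
      have hcrb : c < b.rowLen r := mem_iff_lt_rowLen.1 f1
      by_cases hrm : r = mm a b
      · -- row m : goes to the horizontal strip in row m-1
        have hm1 : 1 ≤ mm a b := by omega
        have hφ : phiF a b (r, c) = (mm a b - 1, a.rowLen (mm a b - 1) + (c - mm a b)) := by
          simp only [phiF]
          rw [if_neg (show ¬ r < mm a b by omega), if_neg (show ¬ c < mm a b by omega),
            if_pos hrm]
        have e2 : b.rowLen r ≤ b.rowLen (mm a b - 1) := b.rowLen_anti _ _ (by omega)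
        have e3 : mm a b ≤ b.rowLen (mm a b - 1) := mm_le_rowLen_b (by omega)
        have e4 : mm a b ≤ a.rowLen (mm a b - 1) := mm_le_rowLen_a (by omega)
        have hmem : (mm a b - 1, a.rowLen (mm a b - 1) + (c - mm a b)) ∈ Hs a b :=
          mem_Hs'.2 ⟨by omega, by omega, by omega⟩
        rw [hφ]
        refine ⟨mem_Dn.2 (Or.inl hmem), Or.inl (by simp only; omega), ?_, ?_⟩
        · rw [Tf_H hmem]
          simp only
          omega
        · simp only [psiF]
          rw [if_pos (show mm a b - 1 < mm a b by omega),
            if_neg (show ¬ (a.rowLen (mm a b - 1) + (c - mm a b) =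
              a.rowLen (mm a b - 1) + (b.rowLen (mm a b - 1) - (mm a b - 1)) - 1) by omega),
            if_pos trivial]
          exact Prod.ext (by simp only; omega) (by simp only; omega)
      · -- rows below m : move one row up inside the body
        have hφ : phiF a b (r, c) = (r - 1, c) := by
          simp only [phiF]
          rw [if_neg (show ¬ r < mm a b by omega), if_neg (show ¬ c < mm a b by omega),
            if_neg hrm]
        have hmem : (r - 1, c) ∈ Bs a b :=
          mem_Bs'.2 ⟨b.up_left_mem (by omega) le_rfl f1, by omega, hc⟩
        rw [hφ]
        refine ⟨mem_Dn.2 (Or.inr (Or.inr hmem)), Or.inl (by simp only; omega), ?_, ?_⟩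
        · rw [Tf_B hmem]
          simp only
          omega
        · simp only [psiF]
          rw [if_neg (show ¬ (r - 1 < mm a b) by omega)]
          exact Prod.ext (by simp only; omega) (by simp only)

lemma Tf_lattice : ∀ i j k,
    ((Dn a b).filter (fun c => (c.1 < i ∨ (c.1 = i ∧ j ≤ c.2)) ∧ Tf a b c = k + 2)).card ≤
    ((Dn a b).filter (fun c => (c.1 < i ∨ (c.1 = i ∧ j ≤ c.2)) ∧ Tf a b c = k + 1)).card := by
  intro i j k
  apply Finset.card_le_card_of_injOn (phiF a b)
  · rintro ⟨r, c⟩ hx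
    simp only [mem_coe, mem_filter] at hx ⊢
    have h := phi_spec (i := i) (j := j) hx.1 hx.2.1 hx.2.2
    exact ⟨h.1, h.2.1, h.2.2.1⟩
  · rintro ⟨r1, c1⟩ hx ⟨r2, c2⟩ hy he
    simp only [Finset.coe_filter, Set.mem_setOf_eq] at hx hy
    have h1 := (phi_spec (i := i) (j := j) hx.1 hx.2.1 hx.2.2).2.2.2
    have h2 := (phi_spec (i := i) (j := j) hy.1 hy.2.1 hy.2.2).2.2.2
    rw [← h1, ← h2, he]


lemma Tf_filling : IsLRFilling (Dn a b) b (Tf a b) :=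
  ⟨fun _ hc => Tf_out hc, fun _ hc => Tf_pos hc, Tf_row_mono, Tf_col_strict,
    Tf_content, Tf_lattice⟩

end construct

section finiteness

lemma value_bound {D : Finset (ℕ × ℕ)} {b : YoungDiagram} {T : ℕ × ℕ → ℕ}
    (hT : IsLRFilling D b T) {c : ℕ × ℕ} (hc : c ∈ D) : T c ≤ b.colLen 0 := by
  have h1 : 1 ≤ T c := hT.2.1 c hc
  have hcontent := hT.2.2.2.2.1 (T c - 1)
  have hmem : c ∈ D.filter (fun x => T x = (T c - 1) + 1) :=
    mem_filter.2 ⟨hc, by omega⟩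
  have hpos : 1 ≤ b.rowLen (T c - 1) := by
    have := Finset.card_pos.2 ⟨c, hmem⟩
    omega
  have : (T c - 1, 0) ∈ b := YoungDiagram.mem_iff_lt_rowLen.2 (by omega)
  have := YoungDiagram.mem_iff_lt_colLen.1 this
  omega

lemma fillings_finite (D : Finset (ℕ × ℕ)) (b : YoungDiagram) :
    {T : ℕ × ℕ → ℕ | IsLRFilling D b T}.Finite := by
  classical
  set N := b.colLen 0 with hN
  have hsub : {T : ℕ × ℕ → ℕ | IsLRFilling D b T} ⊆
      Set.range (fun g : (↥D → Fin (N + 1)) => fun x =>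
        if h : x ∈ D then (g ⟨x, h⟩ : ℕ) else 0) := by
    intro T hT
    refine ⟨fun c => ⟨T c.1, by have := value_bound hT c.2; omega⟩, ?_⟩
    funext x
    by_cases h : x ∈ D
    · simp only [dif_pos h]
    · simp only [dif_neg h]
      exact (hT.1 x h).symm
  exact Set.Finite.subset (Set.finite_range _) hsub

end finiteness

lemma exists_dir (a b : YoungDiagram) :
    ∃ ν : YoungDiagram, lr ν a b ≠ 0 ∧ ∀ i, hl ν i = hl a i + hl b i := by
  refine ⟨nuD a b, ?_, hl_nuD⟩
  unfold lr skewCoeff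
  rw [skew_nuD]
  have hfin := fillings_finite (Dn a b) b
  have hne : {T : ℕ × ℕ → ℕ | IsLRFilling (Dn a b) b T}.Nonempty := ⟨Tf a b, Tf_filling⟩
  have := (Set.ncard_pos hfin).2 hne
  omega


/-- For partitions `a`, `b`, the lexicographically largest principal hook length
partition among all `ν` with `c(ν; a, b) ≠ 0` is `hl(a) + hl(b)` (componentwise):
it is attained, and it bounds every other one from above in lexicographic order. -/
theorem stmt7 (a b : YoungDiagram) :
    (∃ ν : YoungDiagram, lr ν a b ≠ 0 ∧ ∀ i, hl ν i = hl a i + hl b i) ∧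
    (∀ ν : YoungDiagram, lr ν a b ≠ 0 →
      lexLE (fun i => hl ν i) (fun i => hl a i + hl b i)) :=
  ⟨exists_dir a b, fun ν h => upper_dir a b ν h⟩
end SkewHooks
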